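/- Fix z ∈ ℝ, constants μ, κ > 0 and a function h : ℝ → [0,∞). Then the function E ↦ W(z,E) on 2×2 real matrices is Fréchet differentiable at every E, and its derivative is the linear map A ↦ (2h(z)(μ E_d + κ E_v^+) − 2κ E_v^-) : A. -/

import Mathlib

open Matrix

/-- Volumetric part of a 2×2 matrix: `((tr F)/2) • I`. -/
noncomputable def Mvol (F : Matrix (Fin 2) (Fin 2) ℝ) : Matrix (Fin 2) (Fin 2) ℝ :=
  (Matrix.trace F / 2) • (1 : Matrix (Fin 2) (Fin 2) ℝ)

/-- Deviatoric part of a 2×2 matrix: `F - F_v`. -/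
noncomputable def Mdev (F : Matrix (Fin 2) (Fin 2) ℝ) : Matrix (Fin 2) (Fin 2) ℝ :=
  F - Mvol F

/-- Tensile volumetric part: `((tr F)_plus / 2) • I`. -/
noncomputable def MvolP (F : Matrix (Fin 2) (Fin 2) ℝ) : Matrix (Fin 2) (Fin 2) ℝ :=
  (max (Matrix.trace F) 0 / 2) • (1 : Matrix (Fin 2) (Fin 2) ℝ)

/-- Compressive volumetric part: `((tr F)_minus / 2) • I`. -/
noncomputable def MvolM (F : Matrix (Fin 2) (Fin 2) ℝ) : Matrix (Fin 2) (Fin 2) ℝ :=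
  (max (-(Matrix.trace F)) 0 / 2) • (1 : Matrix (Fin 2) (Fin 2) ℝ)

/-- Frobenius inner product `A : B := tr(Aᵀ B)`. -/
noncomputable def mInner (A B : Matrix (Fin 2) (Fin 2) ℝ) : ℝ := Matrix.trace (Aᵀ * B)

/-- Frobenius norm. -/
noncomputable def fnorm (A : Matrix (Fin 2) (Fin 2) ℝ) : ℝ := Real.sqrt (mInner A A)

/-- Elastic energy density with tension–compression splitting:
`W(z,E) = h(z)(μ|E_d|² + κ|E_v⁺|²) + κ|E_v⁻|²`. -/
noncomputable def W (mu kappa : ℝ) (h : ℝ → ℝ) (z : ℝ)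
    (E : Matrix (Fin 2) (Fin 2) ℝ) : ℝ :=
  h z * (mu * fnorm (Mdev E) ^ 2 + kappa * fnorm (MvolP E) ^ 2) +
    kappa * fnorm (MvolM E) ^ 2

/-- The stress `∂_E W(z,E) = 2h(z)(μ E_d + κ E_v⁺) - 2κ E_v⁻`. -/
noncomputable def dW (mu kappa : ℝ) (h : ℝ → ℝ) (z : ℝ)
    (E : Matrix (Fin 2) (Fin 2) ℝ) : Matrix (Fin 2) (Fin 2) ℝ :=
  (2 * h z) • (mu • Mdev E + kappa • MvolP E) - (2 * kappa) • MvolM E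

/-- The partial derivative `∂_z W(z,E) = h'(z)(μ|E_d|² + κ|E_v⁺|²)`. -/
noncomputable def dzW (mu kappa : ℝ) (h : ℝ → ℝ) (z : ℝ)
    (E : Matrix (Fin 2) (Fin 2) ℝ) : ℝ :=
  deriv h z * (mu * fnorm (Mdev E) ^ 2 + kappa * fnorm (MvolP E) ^ 2)

attribute [local instance] Matrix.normedAddCommGroup Matrix.normedSpace


/- ### Auxiliary lemmas -/


lemma mInner_eq (A B : Matrix (Fin 2) (Fin 2) ℝ) :
    mInner A B = A 0 0 * B 0 0 + A 0 1 * B 0 1 + A 1 0 * B 1 0 + A 1 1 * B 1 1 := by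
  simp [mInner, Matrix.trace, Matrix.mul_apply, Fin.sum_univ_two, Matrix.transpose_apply]
  ring

lemma mInner_self_nonneg (A : Matrix (Fin 2) (Fin 2) ℝ) : 0 ≤ mInner A A := by
  rw [mInner_eq]
  nlinarith [mul_self_nonneg (A 0 0), mul_self_nonneg (A 0 1), mul_self_nonneg (A 1 0), mul_self_nonneg (A 1 1)]

lemma fnorm_sq (A : Matrix (Fin 2) (Fin 2) ℝ) : fnorm A ^ 2 = mInner A A :=
  Real.sq_sqrt (mInner_self_nonneg A)

noncomputable def trCLM : Matrix (Fin 2) (Fin 2) ℝ →L[ℝ] ℝ :=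
  LinearMap.toContinuousLinearMap (Matrix.traceLinearMap (Fin 2) ℝ ℝ)

noncomputable def coordCLM (i j : Fin 2) : Matrix (Fin 2) (Fin 2) ℝ →L[ℝ] ℝ :=
  LinearMap.toContinuousLinearMap
    { toFun := fun M => M i j, map_add' := fun _ _ => rfl, map_smul' := fun _ _ => rfl }

@[simp] lemma trCLM_apply (A : Matrix (Fin 2) (Fin 2) ℝ) : trCLM A = Matrix.trace A := by
  simp [trCLM]

@[simp] lemma coordCLM_apply (i j : Fin 2) (A : Matrix (Fin 2) (Fin 2) ℝ) :
    coordCLM i j A = A i j := by simp [coordCLM]; rfl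

noncomputable def Squad : Matrix (Fin 2) (Fin 2) ℝ → ℝ :=
  fun M => ∑ p : Fin 2 × Fin 2, (M p.1 p.2) ^ 2

lemma hasFDerivAt_Squad (E : Matrix (Fin 2) (Fin 2) ℝ) :
    HasFDerivAt Squad (∑ p : Fin 2 × Fin 2, (2 * E p.1 p.2) • coordCLM p.1 p.2) E := by
  apply HasFDerivAt.fun_sum
  intro p _
  have hc := (coordCLM p.1 p.2).hasFDerivAt (x := E)
  have hm := hc.fun_mul hc
  simp only [coordCLM_apply] at hm
  have : (fun M : Matrix (Fin 2) (Fin 2) ℝ => M p.1 p.2 * M p.1 p.2) =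
      fun M => (M p.1 p.2) ^ 2 := by funext M; ring
  rw [this] at hm
  refine hm.congr_fderiv ?_
  ext A
  change E p.1 p.2 * A p.1 p.2 + E p.1 p.2 * A p.1 p.2 = (2 * E p.1 p.2) * A p.1 p.2
  ring

lemma Squad_eq (F : Matrix (Fin 2) (Fin 2) ℝ) : Squad F = mInner F F := by
  rw [mInner_eq, Squad, Fintype.sum_prod_type, Fin.sum_univ_two]
  simp [Fin.sum_univ_two]
  ring

lemma hasDerivAt_maxsq (s : ℝ) : HasDerivAt (fun t => max t 0 ^ 2) (2 * max s 0) s := by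
  rcases lt_trichotomy s 0 with hs | hs | hs
  · rw [max_eq_right hs.le, mul_zero]
    have hev : (fun t : ℝ => max t 0 ^ 2) =ᶠ[nhds s] fun _ => (0 : ℝ) := by
      filter_upwards [Iio_mem_nhds hs] with t ht
      rw [Set.mem_Iio] at ht
      simp [max_eq_right ht.le]
    exact (hasDerivAt_const s (0 : ℝ)).congr_of_eventuallyEq hev
  · subst hs
    rw [max_self, mul_zero]
    rw [hasDerivAt_iff_isLittleO]
    simp only [sub_zero, smul_zero, max_self, ne_eq, OfNat.ofNat_ne_zero,
      not_false_eq_true, zero_pow]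
    rw [Asymptotics.isLittleO_iff]
    intro c hc
    filter_upwards [Metric.ball_mem_nhds (0 : ℝ) hc] with t ht
    rw [Metric.mem_ball, Real.dist_eq, sub_zero] at ht
    have h1 : |max t 0| ≤ |t| := by
      rcases le_or_gt t 0 with h | h
      · simp [max_eq_right h]
      · simp [max_eq_left h.le]
    calc ‖max t 0 ^ 2‖ = |max t 0| * |max t 0| := by
            rw [Real.norm_eq_abs, abs_pow]; ring
      _ ≤ |t| * |t| := mul_le_mul h1 h1 (abs_nonneg _) (abs_nonneg _)
      _ ≤ c * ‖t‖ := by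
            rw [Real.norm_eq_abs]
            exact mul_le_mul_of_nonneg_right ht.le (abs_nonneg _)
  · rw [max_eq_left hs.le]
    have hev : (fun t : ℝ => max t 0 ^ 2) =ᶠ[nhds s] fun t => t ^ 2 := by
      filter_upwards [Ioi_mem_nhds hs] with t ht
      simp [max_eq_left (le_of_lt (Set.mem_Ioi.mp ht))]
    have := hasDerivAt_pow 2 s
    norm_num at this
    exact this.congr_of_eventuallyEq hev

lemma hasDerivAt_maxnegsq (s : ℝ) :
    HasDerivAt (fun t => max (-t) 0 ^ 2) (2 * max (-s) 0 * (-1)) s := by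
  have h1 := hasDerivAt_maxsq (-s)
  have h2 : HasDerivAt (fun t : ℝ => -t) (-1) s := (hasDerivAt_id s).neg
  exact h1.comp s h2

/-- for fixed `z`, `E ↦ W(z,E)` is Fréchet differentiable at every
`E`, with derivative the linear map `A ↦ (2h(z)(μ E_d + κ E_v⁺) - 2κ E_v⁻) : A`. -/
theorem W_hasFDerivAt (mu kappa : ℝ) (hmu : 0 < mu) (hkappa : 0 < kappa)
    (h : ℝ → ℝ) (hh : ∀ z, 0 ≤ h z) (z : ℝ) (E : Matrix (Fin 2) (Fin 2) ℝ) :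
    ∃ L : Matrix (Fin 2) (Fin 2) ℝ →L[ℝ] ℝ,
      (∀ A, L A = mInner (dW mu kappa h z E) A) ∧
      HasFDerivAt (fun E' => W mu kappa h z E') L E := by
  -- scalar reformulation
  have hW : (fun E' => W mu kappa h z E') = fun E' =>
      h z * (mu * Squad E' - (mu / 2) * (trCLM E') ^ 2 +
        (kappa / 2) * max (trCLM E') 0 ^ 2) +
      (kappa / 2) * max (-(trCLM E')) 0 ^ 2 := by
    funext F
    rw [W, fnorm_sq, fnorm_sq, fnorm_sq, Squad_eq, trCLM_apply]
    simp only [mInner_eq]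
    simp only [Mdev, Mvol, MvolP, MvolM, Matrix.sub_apply, Matrix.smul_apply,
      Matrix.one_apply, Matrix.trace, Matrix.diag, Fin.sum_univ_two]
    norm_num
    ring
  -- pieces
  have hS := hasFDerivAt_Squad E
  have hT : HasFDerivAt (fun E' => trCLM E') trCLM E := trCLM.hasFDerivAt
  have ht2 : HasFDerivAt (fun E' => (trCLM E') ^ 2) ((2 * trCLM E) • trCLM) E := by
    have := hasDerivAt_pow 2 (trCLM E)
    norm_num at this
    exact this.comp_hasFDerivAt E hT
  have hp : HasFDerivAt (fun E' => max (trCLM E') 0 ^ 2)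
      ((2 * max (trCLM E) 0) • trCLM) E :=
    (hasDerivAt_maxsq (trCLM E)).comp_hasFDerivAt E hT
  have hm : HasFDerivAt (fun E' => max (-(trCLM E')) 0 ^ 2)
      ((2 * max (-(trCLM E)) 0 * (-1)) • trCLM) E :=
    (hasDerivAt_maxnegsq (trCLM E)).comp_hasFDerivAt E hT
  have hf := ((((hS.const_mul mu).fun_sub (ht2.const_mul (mu / 2))).fun_add
      (hp.const_mul (kappa / 2))).const_mul (h z)).fun_add (hm.const_mul (kappa / 2))
  rw [← hW] at hf
  refine ⟨_, ?_, hf⟩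
  intro A
  change h z * (mu * (∑ p : Fin 2 × Fin 2, (2 * E p.1 p.2) • coordCLM p.1 p.2) A -
      (mu / 2) * ((2 * trCLM E) * trCLM A) + (kappa / 2) * ((2 * max (trCLM E) 0) * trCLM A)) +
      (kappa / 2) * ((2 * max (-(trCLM E)) 0 * (-1)) * trCLM A) = _
  simp only [ContinuousLinearMap.add_apply, ContinuousLinearMap.smul_apply,
    ContinuousLinearMap.sub_apply, ContinuousLinearMap.coe_sum', Finset.sum_apply,
    trCLM_apply, coordCLM_apply, smul_eq_mul]
  rw [mInner_eq]
  simp only [dW, Mdev, Mvol, MvolP, MvolM, Matrix.sub_apply, Matrix.add_apply,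
    Matrix.smul_apply, Matrix.one_apply, Matrix.trace, Matrix.diag, Fin.sum_univ_two,
    Fintype.sum_prod_type, smul_eq_mul]
  norm_num
  ring
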